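/- Exact marginal likelihood for the toy univariate Gaussian mixture (Theorem in Supplement C): consider the model Y_1,…,Y_n | μ i.i.d. ~ Σ_{g=1}^{G} (1/G) N(μ_g, 1) with prior μ_1,…,μ_G i.i.d. standard normal (and σ_g = 1, τ_g = 1/G fixed). Then the marginal likelihood equals p(Y) = G^{−n} Σ_{C} MVN_n(Y; 0_n, I_n + O(C)), where the sum ranges over all allocation matrices C ∈ {0,1}^{n×G} with each row summing to 1, and O(C) is the n×n matrix with O(C)_{ij} = 1 if C_i = C_j and 0 otherwise; here MVN_n(Y; m, Σ) denotes the n-dimensional Gaussian density with mean m and covariance Σ evaluated at Y. -/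

import Mathlib

open MeasureTheory Matrix

/-- The `n`-dimensional Gaussian density with mean `m` and covariance `S`:
`MVN_n(y; m, S) = (2π)^{−n/2} det(S)^{−1/2} exp(−(y−m)ᵀS⁻¹(y−m)/2)`. -/
noncomputable def mvnPdf {n : ℕ} (m : Fin n → ℝ) (S : Matrix (Fin n) (Fin n) ℝ)
    (y : Fin n → ℝ) : ℝ :=
  (2 * Real.pi) ^ (-(n : ℝ) / 2) * S.det ^ (-(1 : ℝ) / 2) *
    Real.exp (-((y - m) ⬝ᵥ (S⁻¹ *ᵥ (y - m))) / 2)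

section Aux

variable {n G : ℕ}

/-- fiber of `g` under allocation `c` -/
def fib (c : Fin n → Fin G) (g : Fin G) : Finset (Fin n) :=
  Finset.univ.filter (fun i => c i = g)

/-- size of the fiber -/
def kk (c : Fin n → Fin G) (g : Fin G) : ℕ := (fib c g).card

lemma sum_boole_fib (c : Fin n → Fin G) (g : Fin G) :
    ∑ i : Fin n, (if c i = g then (1:ℝ) else 0) = (kk c g : ℝ) := by
  rw [Finset.sum_boole]; rfl

lemma det_one_add_O (c : Fin n → Fin G) :
    (1 + Matrix.of (fun i j => if c i = c j then (1:ℝ) else 0)).det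
      = ∏ g : Fin G, (1 + (kk c g : ℝ)) := by
  classical
  set A : Matrix (Fin n) (Fin G) ℝ := Matrix.of (fun i g => if c i = g then 1 else 0) with hA
  have hO : Matrix.of (fun i j => if c i = c j then (1:ℝ) else 0) = A * Aᵀ := by
    ext i j
    simp only [Matrix.mul_apply, Matrix.transpose_apply, hA, Matrix.of_apply]
    rw [Finset.sum_congr rfl (fun g _ => show
        (if c i = g then (1:ℝ) else 0) * (if c j = g then 1 else 0)
          = (if g = c i then (if c j = g then (1:ℝ) else 0) else 0) by
      by_cases h : c i = g
      · rw [if_pos h, if_pos h.symm, one_mul]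
      · rw [if_neg h, zero_mul, if_neg (fun hh : g = c i => h hh.symm)])]
    rw [Finset.sum_ite_eq' Finset.univ (c i) (fun g => if c j = g then (1:ℝ) else 0)]
    simp [eq_comm]
  have hD : Aᵀ * A = Matrix.diagonal (fun g => (kk c g : ℝ)) := by
    ext g h
    simp only [Matrix.mul_apply, Matrix.transpose_apply, hA, Matrix.of_apply,
      Matrix.diagonal_apply]
    by_cases hgh : g = h
    · subst hgh
      simp only [if_pos rfl]
      rw [← sum_boole_fib c g]
      exact Finset.sum_congr rfl (fun i _ => by by_cases h : c i = g <;> simp [h])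
    · rw [if_neg hgh, Finset.sum_eq_zero]
      intro i _
      by_cases h1 : c i = g
      · rw [if_pos h1, if_neg (fun hh => hgh (h1.symm.trans hh)), mul_zero]
      · rw [if_neg h1, zero_mul]
  rw [hO, Matrix.det_one_add_mul_comm, hD, ← Matrix.diagonal_one, Matrix.diagonal_add,
    Matrix.det_diagonal]

lemma inv_one_add_O (c : Fin n → Fin G) :
    (1 + Matrix.of (fun i j => if c i = c j then (1:ℝ) else 0))⁻¹
      = 1 - Matrix.of (fun i j => if c i = c j then (1 + (kk c (c i) : ℝ))⁻¹ else 0) := by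
  classical
  set O' : Matrix (Fin n) (Fin n) ℝ := Matrix.of (fun i j => if c i = c j then (1:ℝ) else 0)
  set M : Matrix (Fin n) (Fin n) ℝ :=
    Matrix.of (fun i j => if c i = c j then (1 + (kk c (c i) : ℝ))⁻¹ else 0) with hM
  have key : O' * M = O' - M := by
    ext i j
    rw [Matrix.mul_apply, Matrix.sub_apply]
    by_cases h : c i = c j
    · have hpos : (0:ℝ) < 1 + (kk c (c i) : ℝ) := by positivity
      have : ∀ l, O' i l * M l j
          = (if c l = c i then (1 + (kk c (c i) : ℝ))⁻¹ else 0) := by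
        intro l
        show (if c i = c l then (1:ℝ) else 0) *
            (if c l = c j then (1 + (kk c (c l) : ℝ))⁻¹ else 0) = _
        by_cases hl : c l = c i
        · rw [if_pos hl.symm, if_pos (hl.trans h), if_pos hl, hl, one_mul]
        · rw [if_neg (fun hh => hl hh.symm), zero_mul, if_neg hl]
      rw [Finset.sum_congr rfl (fun l _ => this l)]
      have hsum : ∑ l : Fin n, (if c l = c i then (1 + (kk c (c i) : ℝ))⁻¹ else 0)
          = (kk c (c i) : ℝ) * (1 + (kk c (c i) : ℝ))⁻¹ := by
        rw [Finset.sum_congr rfl (fun l _ => show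
            (if c l = c i then (1 + (kk c (c i) : ℝ))⁻¹ else 0)
              = (if c l = c i then (1:ℝ) else 0) * (1 + (kk c (c i) : ℝ))⁻¹ by
          by_cases hl : c l = c i <;> simp [hl]), ← Finset.sum_mul, Finset.sum_boole]
        congr 1
      rw [hsum]
      show _ = (if c i = c j then (1:ℝ) else 0) - (if c i = c j then (1 + (kk c (c i):ℝ))⁻¹ else 0)
      rw [if_pos h, if_pos h]
      field_simp
      ring
    · rw [Finset.sum_eq_zero, show O' i j - M i j = 0 by
        show (if c i = c j then (1:ℝ) else 0) - (if c i = c j then _ else 0) = 0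
        rw [if_neg h, if_neg h, sub_zero]]
      intro l _
      show (if c i = c l then (1:ℝ) else 0) * (if c l = c j then _ else 0) = 0
      by_cases hl : c i = c l
      · rw [if_neg (fun hh => h (hl.trans hh)), mul_zero]
      · rw [if_neg hl, zero_mul]
  apply Matrix.inv_eq_right_inv
  rw [Matrix.add_mul, Matrix.one_mul, Matrix.mul_sub, Matrix.mul_one, key]
  abel

lemma quad_form (c : Fin n → Fin G) (Y : Fin n → ℝ) :
    Y ⬝ᵥ ((1 - Matrix.of (fun i j => if c i = c j then (1 + (kk c (c i) : ℝ))⁻¹ else 0)) *ᵥ Y)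
      = (∑ i, Y i ^ 2) - ∑ g, (∑ i ∈ fib c g, Y i) ^ 2 / (1 + (kk c g : ℝ)) := by
  classical
  rw [Matrix.sub_mulVec, Matrix.one_mulVec, dotProduct_sub]
  congr 1
  · simp [dotProduct, sq]
  · rw [dotProduct]
    have : ∀ i, Y i * (Matrix.of (fun i j => if c i = c j then (1 + (kk c (c i) : ℝ))⁻¹ else 0)
        *ᵥ Y) i = Y i * (∑ j ∈ fib c (c i), Y j) / (1 + (kk c (c i) : ℝ)) := by
      intro i
      rw [Matrix.mulVec, dotProduct]
      have : ∀ j, (Matrix.of (fun i j => if c i = c j then (1 + (kk c (c i) : ℝ))⁻¹ else 0)) i j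
          * Y j = (if c j = c i then Y j else 0) * (1 + (kk c (c i) : ℝ))⁻¹ := by
        intro j
        show (if c i = c j then (1 + (kk c (c i) : ℝ))⁻¹ else 0) * Y j = _
        by_cases hj : c i = c j
        · rw [if_pos hj, if_pos hj.symm]; ring
        · rw [if_neg hj, if_neg (fun hh => hj hh.symm), zero_mul, zero_mul]
      rw [Finset.sum_congr rfl fun j _ => this j, ← Finset.sum_mul, ← Finset.sum_filter]
      show Y i * ((∑ j ∈ fib c (c i), Y j) * _) = _
      ring
    rw [Finset.sum_congr rfl fun i _ => this i, ← Finset.sum_fiberwise Finset.univ c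
      (fun i => Y i * (∑ j ∈ fib c (c i), Y j) / (1 + (kk c (c i) : ℝ)))]
    refine Finset.sum_congr rfl fun g _ => ?_
    have : ∀ i ∈ Finset.univ.filter (fun i => c i = g),
        Y i * (∑ j ∈ fib c (c i), Y j) / (1 + (kk c (c i) : ℝ))
          = Y i * ((∑ j ∈ fib c g, Y j) / (1 + (kk c g : ℝ))) := by
      intro i hi
      rw [(Finset.mem_filter.1 hi).2]
      ring
    rw [Finset.sum_congr rfl this, ← Finset.sum_mul]
    show (∑ i ∈ fib c g, Y i) * _ = _
    rw [sq]
    ring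

lemma gauss_shift {a : ℝ} (ha : 0 < a) (t : ℝ) :
    ∫ x : ℝ, Real.exp (-(a/2) * (x - t)^2) = Real.sqrt (2 * Real.pi / a) := by
  rw [integral_sub_right_eq_self (fun x => Real.exp (-(a/2) * x^2)) t,
    integral_gaussian]
  congr 1
  field_simp

lemma exponent_key {k : ℝ} (hk : 0 ≤ k) (S Q : ℝ) : ∀ μ : ℝ, -((1+k)*μ^2 - 2*S*μ + Q)/2
    = -((1+k)/2) * (μ - S/(1+k))^2 + (-(Q - S^2/(1+k))/2) := by
  have ha : (0:ℝ) < 1 + k := by linarith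
  intro μ; field_simp; ring

lemma integral_group {k : ℝ} (hk : 0 ≤ k) (S Q : ℝ) :
    ∫ μ : ℝ, Real.exp (-((1+k)*μ^2 - 2*S*μ + Q)/2)
      = Real.sqrt (2*Real.pi/(1+k)) * Real.exp (-(Q - S^2/(1+k))/2) := by
  simp_rw [exponent_key hk S Q, Real.exp_add]
  rw [integral_mul_const, gauss_shift (by linarith : (0:ℝ) < 1+k)]

lemma integrable_group {k : ℝ} (hk : 0 ≤ k) (S Q : ℝ) :
    Integrable (fun μ : ℝ => Real.exp (-((1+k)*μ^2 - 2*S*μ + Q)/2)) := by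
  simp_rw [exponent_key hk S Q, Real.exp_add]
  exact ((integrable_exp_neg_mul_sq (by linarith : (0:ℝ) < (1+k)/2)).comp_sub_right
    (S/(1+k))).mul_const _

noncomputable def hfun (c : Fin n → Fin G) (Y : Fin n → ℝ) (g : Fin G) (t : ℝ) : ℝ :=
  Real.exp (-t^2/2) / Real.sqrt (2*Real.pi) *
    ∏ i ∈ fib c g, Real.exp (-(Y i - t)^2/2) / Real.sqrt (2*Real.pi)

lemma hfun_rep (c : Fin n → Fin G) (Y : Fin n → ℝ) (g : Fin G) (t : ℝ) :
    hfun c Y g t = ((Real.sqrt (2*Real.pi))⁻¹)^(kk c g + 1) *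
      Real.exp (-((1+(kk c g : ℝ))*t^2 - 2*(∑ i ∈ fib c g, Y i)*t
        + ∑ i ∈ fib c g, (Y i)^2)/2) := by
  unfold hfun
  rw [Finset.prod_div_distrib, Finset.prod_const, ← Real.exp_sum]
  have hsum : ∑ i ∈ fib c g, (-(Y i - t)^2/2)
      = -(((kk c g : ℝ))*t^2 - 2*(∑ i ∈ fib c g, Y i)*t + ∑ i ∈ fib c g, (Y i)^2)/2 := by
    have h1 : ∀ i ∈ fib c g, -(Y i - t)^2/2 = -(Y i)^2/2 + (Y i) * t + (-(t^2)/2) :=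
      fun i _ => by ring
    rw [Finset.sum_congr rfl h1, Finset.sum_add_distrib, Finset.sum_add_distrib,
      ← Finset.sum_mul, Finset.sum_const, nsmul_eq_mul]
    have h2 : ∑ i ∈ fib c g, -(Y i)^2/2 = -(∑ i ∈ fib c g, (Y i)^2)/2 := by
      rw [← Finset.sum_div, ← Finset.sum_neg_distrib]
    rw [h2]
    show _ = -(((fib c g).card : ℝ)*t^2 - _ + _)/2
    ring
  rw [hsum, show -((1+(kk c g : ℝ))*t^2 - 2*(∑ i ∈ fib c g, Y i)*t + ∑ i ∈ fib c g, (Y i)^2)/2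
      = -t^2/2 + -(((kk c g : ℝ))*t^2 - 2*(∑ i ∈ fib c g, Y i)*t + ∑ i ∈ fib c g, (Y i)^2)/2
      from by ring, Real.exp_add, pow_succ,
    show (fib c g).card = kk c g from rfl]
  have hs : Real.sqrt (2*Real.pi) ≠ 0 := by positivity
  field_simp
  ring_nf
  have hs' : Real.sqrt (Real.pi*2) ≠ 0 := by positivity
  rw [inv_pow, mul_right_comm (Real.sqrt (Real.pi*2)), mul_inv_cancel₀ hs', one_mul,
    mul_inv_cancel₀ (pow_ne_zero _ hs')]

lemma integrable_hfun (c : Fin n → Fin G) (Y : Fin n → ℝ) (g : Fin G) :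
    Integrable (hfun c Y g) := by
  rw [funext (hfun_rep c Y g)]
  exact (integrable_group (Nat.cast_nonneg _) _ _).const_mul _

lemma integral_hfun (c : Fin n → Fin G) (Y : Fin n → ℝ) (g : Fin G) :
    ∫ t : ℝ, hfun c Y g t
      = ((Real.sqrt (2*Real.pi))⁻¹)^(kk c g) * (Real.sqrt (1+(kk c g:ℝ)))⁻¹ *
        Real.exp (-((∑ i ∈ fib c g, (Y i)^2)
          - (∑ i ∈ fib c g, Y i)^2/(1+(kk c g:ℝ)))/2) := by
  simp_rw [hfun_rep]
  rw [integral_const_mul, integral_group (Nat.cast_nonneg _),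
    Real.sqrt_div (by positivity : (0:ℝ) ≤ 2*Real.pi), pow_succ]
  have hs : Real.sqrt (2*Real.pi) ≠ 0 := by positivity
  have hk : Real.sqrt (1+(kk c g : ℝ)) ≠ 0 := by positivity
  field_simp

lemma sum_kk (c : Fin n → Fin G) : ∑ g, kk c g = n := by
  have h := Finset.card_eq_sum_card_fiberwise
    (f := c) (s := Finset.univ) (t := Finset.univ) (fun x _ => Finset.mem_univ _)
  simp only [Finset.card_fin] at h
  exact h.symm

lemma integral_c (c : Fin n → Fin G) (Y : Fin n → ℝ) :
    ∫ μ : Fin G → ℝ, ∏ g, hfun c Y g (μ g)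
      = ((Real.sqrt (2*Real.pi))⁻¹)^n * (∏ g, (Real.sqrt (1+(kk c g:ℝ)))⁻¹) *
        Real.exp (-((∑ i, (Y i)^2)
          - ∑ g, (∑ i ∈ fib c g, Y i)^2/(1+(kk c g:ℝ)))/2) := by
  rw [MeasureTheory.integral_fintype_prod_volume_eq_prod (ι := Fin G) (fun g => hfun c Y g),
    Finset.prod_congr rfl (fun g _ => integral_hfun c Y g),
    Finset.prod_mul_distrib, Finset.prod_mul_distrib, ← Real.exp_sum,
    Finset.prod_pow_eq_pow_sum, sum_kk]
  have h : ∑ g, -((∑ i ∈ fib c g, (Y i)^2) - (∑ i ∈ fib c g, Y i)^2/(1+(kk c g:ℝ)))/2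
      = -((∑ g, ∑ i ∈ fib c g, (Y i)^2)
          - ∑ g, (∑ i ∈ fib c g, Y i)^2/(1+(kk c g:ℝ)))/2 := by
    rw [← Finset.sum_div]
    congr 1
    simp_rw [neg_sub]
    rw [Finset.sum_sub_distrib, ← neg_sub]
  rw [h, show ∑ g, ∑ i ∈ fib c g, (Y i)^2 = ∑ i, (Y i)^2 from
    Finset.sum_fiberwise Finset.univ c (fun i => (Y i)^2)]

lemma mvnPdf_eval (c : Fin n → Fin G) (Y : Fin n → ℝ) :
    mvnPdf 0 (1 + Matrix.of (fun i j => if c i = c j then (1:ℝ) else 0)) Y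
      = ((Real.sqrt (2*Real.pi))⁻¹)^n * (∏ g, (Real.sqrt (1+(kk c g:ℝ)))⁻¹) *
        Real.exp (-((∑ i, (Y i)^2)
          - ∑ g, (∑ i ∈ fib c g, Y i)^2/(1+(kk c g:ℝ)))/2) := by
  unfold mvnPdf
  rw [sub_zero, det_one_add_O, inv_one_add_O, quad_form]
  congr 1
  congr 1
  · rw [show (-(n:ℝ)/2) = (-(1:ℝ)/2) * (n:ℝ) by ring,
      Real.rpow_mul (by positivity : (0:ℝ) ≤ 2*Real.pi), Real.rpow_natCast]
    congr 1
    rw [show (-(1:ℝ)/2) = -(1/2) by ring,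
      Real.rpow_neg (by positivity : (0:ℝ) ≤ 2*Real.pi), ← Real.sqrt_eq_rpow]
  · rw [← Real.finset_prod_rpow _ _ (fun g _ => by positivity) _]
    refine Finset.prod_congr rfl fun g _ => ?_
    rw [show (-(1:ℝ)/2) = -(1/2) by ring,
      Real.rpow_neg (by positivity : (0:ℝ) ≤ 1 + (kk c g : ℝ)), ← Real.sqrt_eq_rpow]

end Aux

/-- Exact marginal likelihood for the toy univariate Gaussian mixture (Theorem in
Supplement C): for the model `Y₁,…,Yₙ | μ i.i.d. ~ ∑_g (1/G) N(μ_g, 1)` with prior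
`μ₁,…,μ_G` i.i.d. standard normal, the marginal likelihood
`p(Y) = ∫ p(Y|μ) π(μ) dμ` equals `G^{−n} ∑_C MVN_n(Y; 0, I_n + O(C))`, where the sum
ranges over all allocation configurations `c : Fin n → Fin G` (one-hot allocation
matrices) and `O(c)_{ij} = 1` if `c i = c j` and `0` otherwise. -/
theorem exact_marginal_likelihood_toy_gaussian_mixture
    {n G : ℕ} (hG : 0 < G)
    (Y : Fin n → ℝ)
    (O : (Fin n → Fin G) → Matrix (Fin n) (Fin n) ℝ)
    (hO : ∀ c i j, O c i j = if c i = c j then (1 : ℝ) else 0) :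
    ∫ μ : Fin G → ℝ,
        (∏ i, ∑ g, (1 / (G : ℝ)) *
            (Real.exp (-(Y i - μ g) ^ 2 / 2) / Real.sqrt (2 * Real.pi))) *
          ∏ g, Real.exp (-(μ g) ^ 2 / 2) / Real.sqrt (2 * Real.pi)
      = (1 / (G : ℝ) ^ n) * ∑ c : Fin n → Fin G, mvnPdf 0 (1 + O c) Y := by
  classical
  have hO' : ∀ c : Fin n → Fin G,
      O c = Matrix.of (fun i j => if c i = c j then (1:ℝ) else 0) := by
    intro c; ext i j; rw [hO]; rfl
  have hint : ∀ μ : Fin G → ℝ,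
      (∏ i, ∑ g, (1 / (G : ℝ)) *
          (Real.exp (-(Y i - μ g) ^ 2 / 2) / Real.sqrt (2 * Real.pi))) *
        ∏ g, Real.exp (-(μ g) ^ 2 / 2) / Real.sqrt (2 * Real.pi)
      = (1/(G:ℝ)^n) * ∑ c : Fin n → Fin G, ∏ g, hfun c Y g (μ g) := by
    intro μ
    have hc : ∀ c : Fin n → Fin G,
        (∏ i, Real.exp (-(Y i - μ (c i)) ^ 2 / 2) / Real.sqrt (2 * Real.pi)) *
          ∏ g, Real.exp (-(μ g) ^ 2 / 2) / Real.sqrt (2 * Real.pi)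
        = ∏ g, hfun c Y g (μ g) := by
      intro c
      rw [← Finset.prod_fiberwise Finset.univ c
          (fun i => Real.exp (-(Y i - μ (c i)) ^ 2 / 2) / Real.sqrt (2 * Real.pi)),
        mul_comm, ← Finset.prod_mul_distrib]
      refine Finset.prod_congr rfl fun g _ => ?_
      unfold hfun fib
      congr 1
      refine Finset.prod_congr rfl fun i hi => ?_
      rw [(Finset.mem_filter.1 hi).2]
    rw [show (∏ i, ∑ g, (1 / (G : ℝ)) *
          (Real.exp (-(Y i - μ g) ^ 2 / 2) / Real.sqrt (2 * Real.pi)))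
        = ∏ i, ((1/(G:ℝ)) *
          ∑ g, (Real.exp (-(Y i - μ g) ^ 2 / 2) / Real.sqrt (2 * Real.pi)))
        from Finset.prod_congr rfl fun i _ => (Finset.mul_sum _ _ _).symm,
      Finset.prod_mul_distrib, Finset.prod_const, Finset.card_fin,
      div_pow, one_pow, Finset.prod_univ_sum]
    simp only [Fintype.piFinset_univ]
    rw [mul_assoc, Finset.sum_mul]
    congr 1
    exact Finset.sum_congr rfl fun c _ => hc c
  simp_rw [hint]
  rw [integral_const_mul, integral_finset_sum (μ := volume) Finset.univ
    (fun c _ => Integrable.fintype_prod_dep (fun g => integrable_hfun c Y g))]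
  congr 1
  refine Finset.sum_congr rfl fun c _ => ?_
  rw [hO' c, mvnPdf_eval, integral_c]
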